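/- Let d be a positive integer, κ > 0, i = (i₁, i₂, i₃) ∈ [d]³, s = (s₁, s₂, s₃) ∈ {−1, 1}³, and x ∈ {−1, 1}^d. Suppose there exists j ∈ {1, 2, 3} with x_{i_j} = s_j. Set x' = κ·x, C^ψ = {c^{ψ,1}, c^{ψ,2}, c^{ψ,3}} with c^{ψ,j} = 2κ·s_j·𝟏_{i_j}, and C^0 = {0}. Then cost_{C^ψ,2}(x') − cost_{C^0,2}(x') ≤ 0. -/

import Mathlib

/-- The `k`-means cost query in the Euclidean metric: `cost_{C,2}(x) = min_{c ∈ C} ‖x - c‖₂²`. -/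
noncomputable def costE {d k : ℕ} (C : Fin k → EuclideanSpace ℝ (Fin d))
    (x : EuclideanSpace ℝ (Fin d)) : ℝ :=
  ⨅ j : Fin k, ‖x - C j‖ ^ 2

theorem stmt_10 (d : ℕ) (hd : 0 < d) (κ : ℝ) (hκ : 0 < κ)
    (idx : Fin 3 → Fin d) (s : Fin 3 → ℝ) (hs : ∀ j, s j = 1 ∨ s j = -1)
    (x : EuclideanSpace ℝ (Fin d)) (hx : ∀ i, x i = 1 ∨ x i = -1)
    (hsat : ∃ j : Fin 3, x (idx j) = s j) :
    costE (fun j : Fin 3 => (2 * κ * s j) • EuclideanSpace.single (idx j) (1 : ℝ)) (κ • x) -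
        costE (fun _ : Fin 1 => (0 : EuclideanSpace ℝ (Fin d))) (κ • x) ≤ 0 := by
  obtain ⟨j, hj⟩ := hsat
  have hs2 : s j ^ 2 = 1 := by rcases hs j with h | h <;> simp [h]
  have hC0 : costE (fun _ : Fin 1 => (0 : EuclideanSpace ℝ (Fin d))) (κ • x)
      = ‖κ • x‖ ^ 2 := by
    simp [costE, ciInf_const]
  have hkey : ‖κ • x - (2 * κ * s j) • EuclideanSpace.single (idx j) (1 : ℝ)‖ ^ 2
      = ‖κ • x‖ ^ 2 := by
    rw [norm_sub_sq_real]
    have hinner : (inner ℝ (κ • x) ((2 * κ * s j) • EuclideanSpace.single (idx j) (1 : ℝ)) : ℝ)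
        = 2 * κ ^ 2 := by
      rw [real_inner_smul_left, real_inner_smul_right, real_inner_comm,
        EuclideanSpace.inner_single_left]
      simp only [map_one, one_mul]
      rw [hj]
      nlinarith [hs2]
    have hnorm : ‖(2 * κ * s j) • EuclideanSpace.single (idx j) (1 : ℝ)‖ ^ 2
        = 4 * κ ^ 2 := by
      rw [norm_smul, mul_pow, EuclideanSpace.norm_single]
      simp only [norm_one, one_pow, mul_one, Real.norm_eq_abs, sq_abs]
      nlinarith [hs2]
    rw [hinner, hnorm]; ring
  have hle : costE (fun j : Fin 3 => (2 * κ * s j) • EuclideanSpace.single (idx j) (1 : ℝ)) (κ • x)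
      ≤ ‖κ • x‖ ^ 2 := by
    rw [← hkey]
    exact ciInf_le ⟨0, fun y ⟨i, hi⟩ => hi ▸ sq_nonneg _⟩ j
  rw [hC0]
  linarith
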